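/- arXiv:1310.7785 — 2 statements merged into one kernel-verified Lean document; each statement's English description precedes it below -/
import Mathlib

section
/- Fix 1 < q < 2 and 0 < μ < λ₁/(2π). Define f : ℝ → ℝ by f(t) = μt for 0 ≤ t ≤ 1, f(t) = μ t^{q−1} e^{t^q − 1} for t > 1, and f(t) = −f(−t) for t < 0. Then f is continuous, odd, f(0) = 0, and f satisfies hypotheses (H): there exist t₀, M > 0 such that (i) 0 < F(t) ≤ M|f(t)| for all |t| ≥ t₀; (ii) 0 < 2F(t) ≤ f(t)t for all t ≠ 0; (iii) limsup_{t→0} F(t)/t² < λ₁/(4π); (iv) lim_{|t|→∞} |f(t)| e^{−α t²} = 0 for every α > 0; where F(t) = ∫₀^t f(τ) dτ. -/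
open MeasureTheory Real Set Filter Topology

noncomputable section

/-- Integrand of the squared Gagliardo `H^{1/2}` seminorm on `ℝ`. -/
def gagKer (u : ℝ → ℝ) : ℝ × ℝ → ℝ :=
  fun p => (u p.1 - u p.2) ^ 2 / |p.1 - p.2| ^ 2

/-- Integrand of the Gagliardo inner product `⟨u,v⟩_X`. -/
def innerKer (u v : ℝ → ℝ) : ℝ × ℝ → ℝ :=
  fun p => (u p.1 - u p.2) * (v p.1 - v p.2) / |p.1 - p.2| ^ 2

/-- `u ∈ H^{1/2}(ℝ)` : `u ∈ L²(ℝ)` with finite Gagliardo seminorm. -/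
def memH (u : ℝ → ℝ) : Prop :=
  Measurable u ∧ Integrable (fun x => (u x) ^ 2) ∧ Integrable (gagKer u)

/-- Squared Gagliardo seminorm `[u]²`. -/
def gagSq (u : ℝ → ℝ) : ℝ := ∫ p : ℝ × ℝ, gagKer u p

/-- Gagliardo seminorm `[u]`, i.e. the norm `‖u‖_X`. -/
def gagNorm (u : ℝ → ℝ) : ℝ := Real.sqrt (gagSq u)

/-- Inner product `⟨u, v⟩_X`. -/
def innerX (u v : ℝ → ℝ) : ℝ := ∫ p : ℝ × ℝ, innerKer u v p

/-- `u ∈ X` : `u ∈ H^{1/2}(ℝ)` and `u = 0` a.e. outside `(0,1)`. -/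
def memX (u : ℝ → ℝ) : Prop :=
  memH u ∧ ∀ᵐ x : ℝ, x ∉ Ioo (0 : ℝ) 1 → u x = 0

/-- `λ₁ = inf {[u]² : u ∈ X, ‖u‖_{L²(0,1)} = 1}`. -/
def lam1 : ℝ :=
  sInf { t : ℝ | ∃ u : ℝ → ℝ, memX u ∧ (∫ x in Ioo (0 : ℝ) 1, (u x) ^ 2) = 1 ∧ gagSq u = t }

/-- Trudinger–Moser property with constant `ω`. -/
def TMprop (ω : ℝ) : Prop :=
  ∀ α : ℝ, 0 < α → α < 2 * π * ω →
    ∃ K : ℝ, 0 < K ∧ ∀ u : ℝ → ℝ, memX u → gagNorm u ≤ 1 →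
      (∫⁻ x in Ioo (0 : ℝ) 1, ENNReal.ofReal (exp (α * (u x) ^ 2))) ≤ ENNReal.ofReal K

/-- The primitive `F(t) = ∫₀ᵗ f(τ) dτ`. -/
def primF (f : ℝ → ℝ) : ℝ → ℝ := fun t => ∫ τ in (0 : ℝ)..t, f τ

/-- Hypotheses (H). -/
def HypH (f : ℝ → ℝ) : Prop :=
  Continuous f ∧ f 0 = 0 ∧
  (∃ t₀ > (0 : ℝ), ∃ M > (0 : ℝ),
    ∀ t : ℝ, t₀ ≤ |t| → 0 < primF f t ∧ primF f t ≤ M * |f t|) ∧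
  (∀ t : ℝ, t ≠ 0 → 0 < 2 * primF f t ∧ 2 * primF f t ≤ f t * t) ∧
  (Filter.limsup (fun t => primF f t / t ^ 2) (𝓝[≠] (0 : ℝ)) < lam1 / (4 * π)) ∧
  (∀ α : ℝ, 0 < α →
    Filter.Tendsto (fun t => |f t| * exp (-α * t ^ 2)) (Filter.cocompact ℝ) (𝓝 0))

/-- Hypotheses (H') with Trudinger–Moser constant `ω`. -/
def HypH' (f : ℝ → ℝ) (ω : ℝ) : Prop :=
  Continuous f ∧ f 0 = 0 ∧
  (∃ t₀ > (0 : ℝ), ∃ M > (0 : ℝ),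
    ∀ t : ℝ, t₀ ≤ |t| → 0 < primF f t ∧ primF f t ≤ M * |f t|) ∧
  (∀ t : ℝ, t ≠ 0 → 0 < 2 * primF f t ∧ 2 * primF f t ≤ f t * t) ∧
  (Filter.limsup (fun t => primF f t / t ^ 2) (𝓝[≠] (0 : ℝ)) < lam1 / (4 * π)) ∧
  ∃ α₀ : ℝ, 0 < α₀ ∧ α₀ < 2 * π * ω ∧
    (∀ α : ℝ, 0 < α → α < α₀ →
      Filter.Tendsto (fun t => |f t| * exp (-α * t ^ 2)) (Filter.cocompact ℝ) Filter.atTop) ∧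
    (∀ α : ℝ, α₀ < α →
      Filter.Tendsto (fun t => |f t| * exp (-α * t ^ 2)) (Filter.cocompact ℝ) (𝓝 0)) ∧
    ∃ ψ : ℝ → ℝ, memX ψ ∧ gagNorm ψ = 1 ∧
      ∃ b : ℝ, b < ω / (2 * α₀) ∧ ∀ t : ℝ, 0 < t →
        t ^ 2 / (4 * π) - (∫ x in Ioo (0 : ℝ) 1, primF f (t * ψ x)) ≤ b

/-- `u` is a (weak) solution of `(-Δ)^{1/2} u = f(u)` in `(0,1)`, `u = 0` outside. -/
def IsWeakSolution (f u : ℝ → ℝ) : Prop :=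
  memX u ∧ ∀ v : ℝ → ℝ, memX v →
    IntegrableOn (fun x => f (u x) * v x) (Ioo (0 : ℝ) 1) ∧
    innerX u v / (2 * π) = ∫ x in Ioo (0 : ℝ) 1, f (u x) * v x

/-- The energy functional `φ(u) = ‖u‖_X²/(4π) - ∫₀¹ F(u) dx`. -/
def phi (f u : ℝ → ℝ) : ℝ :=
  gagSq u / (4 * π) - ∫ x in Ioo (0 : ℝ) 1, primF f (u x)

/-- `⟨φ'(u), v⟩ = (1/(2π))⟨u,v⟩_X - ∫₀¹ f(u) v dx`. -/
def phiDeriv (f u v : ℝ → ℝ) : ℝ :=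
  innerX u v / (2 * π) - ∫ x in Ioo (0 : ℝ) 1, f (u x) * v x

/-- The Palais–Smale condition at level `c`. -/
def PalaisSmaleAt (f : ℝ → ℝ) (c : ℝ) : Prop :=
  ∀ u : ℕ → ℝ → ℝ, (∀ n, memX (u n)) →
    Filter.Tendsto (fun n => phi f (u n)) Filter.atTop (𝓝 c) →
    (∃ ε : ℕ → ℝ, Filter.Tendsto ε Filter.atTop (𝓝 0) ∧
      ∀ n, ∀ v : ℝ → ℝ, memX v → gagNorm v ≤ 1 → |phiDeriv f (u n) v| ≤ ε n) →
    ∃ w : ℝ → ℝ, memX w ∧ ∃ g : ℕ → ℕ, StrictMono g ∧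
      Filter.Tendsto (fun k => gagNorm (fun x => u (g k) x - w x)) Filter.atTop (𝓝 0)

/-- The nonlinearity of Example 3.4: `f(t) = μ t` for `0 ≤ t ≤ 1`,
`f(t) = μ t^{q-1} e^{t^q - 1}` for `t > 1`, odd extension for `t < 0`. -/
def fSub (μ q : ℝ) : ℝ → ℝ := fun t =>
  if 0 ≤ t then (if t ≤ 1 then μ * t else μ * t ^ (q - 1) * exp (t ^ q - 1))
  else -(if -t ≤ 1 then μ * (-t) else μ * (-t) ^ (q - 1) * exp ((-t) ^ q - 1))

variable {q μ : ℝ}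

lemma fSub_odd (μ q : ℝ) (t : ℝ) : fSub μ q (-t) = -(fSub μ q t) := by
  rcases lt_trichotomy t 0 with ht | rfl | ht
  · have h1 : (0:ℝ) ≤ -t := by linarith
    have h2 : ¬ (0:ℝ) ≤ t := not_le.mpr ht
    simp [fSub, h1, h2]
  · simp [fSub]
  · have h1 : ¬ (0:ℝ) ≤ -t := by simp; linarith
    have h2 : (0:ℝ) ≤ t := le_of_lt ht
    simp [fSub, h1, h2]

lemma fSub_cont (hμ0 : 0 < μ) (hq1 : 1 < q) : Continuous (fSub μ q) := by
  have hA : Continuous fun t : ℝ => if t ≤ 1 then μ * t else μ * t ^ (q - 1) * exp (t ^ q - 1) := by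
    apply Continuous.if_le
    · exact continuous_const.mul continuous_id
    · have h1 : Continuous fun t : ℝ => t ^ (q - 1) :=
        continuous_iff_continuousAt.mpr fun x => continuousAt_rpow_const x _ (Or.inr (by linarith))
      have h2 : Continuous fun t : ℝ => t ^ q :=
        continuous_iff_continuousAt.mpr fun x => continuousAt_rpow_const x _ (Or.inr (by linarith))
      exact (continuous_const.mul h1).mul ((h2.sub continuous_const).rexp)
    · exact continuous_id
    · exact continuous_const
    · intro x hx; subst hx
      simp [Real.one_rpow]
  have := hA
  unfold fSub
  apply Continuous.if_le
  · exact hA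
  · exact (hA.comp continuous_neg).neg
  · exact continuous_const
  · exact continuous_id
  · intro x hx
    have : x = 0 := hx.symm
    subst this
    simp

lemma fSub_eq_small {t : ℝ} (ht0 : 0 ≤ t) (ht1 : t ≤ 1) : fSub μ q t = μ * t := by
  simp [fSub, ht0, ht1]

lemma fSub_eq_large {t : ℝ} (ht : 1 ≤ t) : fSub μ q t = μ * t ^ (q - 1) * exp (t ^ q - 1) := by
  rcases eq_or_lt_of_le ht with rfl | h
  · simp [fSub, Real.one_rpow]
  · have : ¬ t ≤ 1 := not_le.mpr h
    simp [fSub, this, le_of_lt (lt_trans one_pos h)]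

lemma primF_small {t : ℝ} (ht0 : 0 ≤ t) (ht1 : t ≤ 1) :
    primF (fSub μ q) t = μ * t ^ 2 / 2 := by
  unfold primF
  rw [intervalIntegral.integral_congr (g := fun x => μ * x)
    (fun x hx => by rw [uIcc_of_le ht0] at hx; exact fSub_eq_small hx.1 (hx.2.trans ht1))]
  rw [intervalIntegral.integral_const_mul, integral_id]
  ring

lemma primF_large {t : ℝ} (hμ0 : 0 < μ) (hq1 : 1 < q) (ht : 1 ≤ t) :
    primF (fSub μ q) t = μ / 2 + μ / q * (exp (t ^ q - 1) - 1) := by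
  have hc := fSub_cont (μ := μ) hμ0 hq1
  have hq0 : (0 : ℝ) < q := by linarith
  have hi1 : IntervalIntegrable (fSub μ q) volume 0 1 := hc.intervalIntegrable 0 1
  have hi2 : IntervalIntegrable (fSub μ q) volume 1 t := hc.intervalIntegrable 1 t
  have hadd := intervalIntegral.integral_add_adjacent_intervals hi1 hi2
  have h1 : (∫ x in (0:ℝ)..1, fSub μ q x) = μ / 2 := by
    have := primF_small (μ := μ) (q := q) (t := 1) zero_le_one le_rfl
    unfold primF at this; rw [this]; ring
  have hcont' : Continuous fun x : ℝ => μ * x ^ (q - 1) * exp (x ^ q - 1) := by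
    have h1' : Continuous fun t : ℝ => t ^ (q - 1) :=
      continuous_iff_continuousAt.mpr fun x => continuousAt_rpow_const x _ (Or.inr (by linarith))
    have h2' : Continuous fun t : ℝ => t ^ q :=
      continuous_iff_continuousAt.mpr fun x => continuousAt_rpow_const x _ (Or.inr (by linarith))
    exact (continuous_const.mul h1').mul ((h2'.sub continuous_const).rexp)
  have h2 : (∫ x in (1:ℝ)..t, fSub μ q x) = μ / q * (exp (t ^ q - 1) - 1) := by
    rw [intervalIntegral.integral_congr (g := fun x => μ * x ^ (q - 1) * exp (x ^ q - 1))
      (fun x hx => by rw [uIcc_of_le ht] at hx; exact fSub_eq_large hx.1)]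
    have hder : ∀ x ∈ uIcc (1:ℝ) t, HasDerivAt (fun y => μ / q * exp (y ^ q - 1))
        (μ * x ^ (q - 1) * exp (x ^ q - 1)) x := by
      intro x hx
      rw [uIcc_of_le ht] at hx
      have hx0 : x ≠ 0 := by intro h; rw [h] at hx; linarith [hx.1]
      have h := ((Real.hasDerivAt_rpow_const (x := x) (p := q) (Or.inl hx0)).sub_const 1).exp
      have h3 := h.const_mul (μ / q)
      refine h3.congr_deriv ?_
      rw [div_mul_eq_mul_div, div_eq_iff hq0.ne']
      ring
    rw [intervalIntegral.integral_eq_sub_of_hasDerivAt hder (hcont'.intervalIntegrable _ _)]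
    rw [Real.one_rpow]
    simp [Real.exp_zero]
    ring
  unfold primF
  rw [← hadd, h1, h2]

lemma primF_even (t : ℝ) : primF (fSub μ q) (-t) = primF (fSub μ q) t := by
  unfold primF
  have h := intervalIntegral.integral_comp_neg (a := 0) (b := t) (fSub μ q)
  simp only [neg_zero] at h
  have h2 : (∫ x in (0:ℝ)..t, fSub μ q (-x)) = -∫ x in (0:ℝ)..t, fSub μ q x := by
    simp_rw [fSub_odd]
    exact intervalIntegral.integral_neg
  have h3 : (∫ x in (-t:ℝ)..0, fSub μ q x) = -∫ x in (0:ℝ)..(-t), fSub μ q x :=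
    intervalIntegral.integral_symm 0 (-t)
  rw [h2, h3] at h
  linarith

lemma key_exp_ineq (x : ℝ) : -1 ≤ (x - 1) * exp x := by
  rcases le_or_gt x 1 with h | h
  · have h1 := Real.add_one_le_exp (-x)
    have h2 : (1 - x) * exp x ≤ exp (-x) * exp x :=
      mul_le_mul_of_nonneg_right (by linarith) (exp_nonneg x)
    rw [← Real.exp_add, neg_add_cancel, Real.exp_zero] at h2
    nlinarith
  · nlinarith [exp_nonneg x, Real.exp_pos x, mul_nonneg (by linarith : (0:ℝ) ≤ x - 1) (exp_nonneg x)]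

lemma abs_fSub_even (t : ℝ) : |fSub μ q (-t)| = |fSub μ q t| := by
  rw [fSub_odd, abs_neg]

-- hypothesis (i) for s ≥ 1 (and ≥ 0)
lemma hyp_i_pos {s : ℝ} (hμ0 : 0 < μ) (hq1 : 1 < q) (hs : 1 ≤ s) :
    0 < primF (fSub μ q) s ∧ primF (fSub μ q) s ≤ 2 * |fSub μ q s| := by
  have hq0 : (0:ℝ) < q := by linarith
  have hs0 : (0:ℝ) < s := lt_of_lt_of_le one_pos hs
  have hF := primF_large hμ0 hq1 hs
  set E := exp (s ^ q - 1) with hEdef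
  have hsq : (1:ℝ) ≤ s ^ q := by
    have := Real.rpow_le_rpow zero_le_one hs hq0.le
    simpa [Real.one_rpow] using this
  have hE : (1:ℝ) ≤ E := by
    rw [hEdef]; calc (1:ℝ) = exp 0 := by rw [Real.exp_zero]
      _ ≤ E := Real.exp_le_exp.mpr (by linarith)
  have hA : (1:ℝ) ≤ s ^ (q - 1) := by
    have := Real.rpow_le_rpow zero_le_one hs (by linarith : (0:ℝ) ≤ q - 1)
    simpa [Real.one_rpow] using this
  have hApos : (0:ℝ) < s ^ (q - 1) := Real.rpow_pos_of_pos hs0 _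
  have hEpos : (0:ℝ) < E := lt_of_lt_of_le one_pos hE
  have hgs : fSub μ q s = μ * s ^ (q-1) * E := fSub_eq_large hs
  have habs : |fSub μ q s| = μ * s ^ (q-1) * E := by
    rw [hgs, abs_of_nonneg (by positivity)]
  constructor
  · rw [hF]
    have : 0 < μ / q := by positivity
    nlinarith
  · rw [hF, habs]
    have h1 : μ / q * (E - 1) ≤ μ * (E - 1) :=
      mul_le_mul_of_nonneg_right (div_le_self hμ0.le hq1.le) (by linarith)
    have h2 : μ * E ≤ μ * (s ^ (q-1) * E) :=
      mul_le_mul_of_nonneg_left (le_mul_of_one_le_left hEpos.le hA) hμ0.le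
    nlinarith

-- hypothesis (ii) for s > 0
lemma hyp_ii_pos {s : ℝ} (hμ0 : 0 < μ) (hq1 : 1 < q) (hs : 0 < s) :
    0 < 2 * primF (fSub μ q) s ∧ 2 * primF (fSub μ q) s ≤ fSub μ q s * s := by
  have hq0 : (0:ℝ) < q := by linarith
  rcases le_or_gt s 1 with h1 | h1
  · rw [primF_small hs.le h1, fSub_eq_small hs.le h1]
    constructor
    · positivity
    · nlinarith
  · have hs1 : (1:ℝ) ≤ s := h1.le
    rw [primF_large hμ0 hq1 hs1, fSub_eq_large hs1]
    set S := s ^ q with hSdef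
    set E := exp (S - 1) with hEdef
    have hS : (1:ℝ) ≤ S := by
      rw [hSdef]
      have := Real.rpow_le_rpow zero_le_one hs1 hq0.le
      simpa [Real.one_rpow] using this
    have hE : (1:ℝ) ≤ E := by
      rw [hEdef]
      calc (1:ℝ) = exp 0 := by rw [Real.exp_zero]
        _ ≤ E := Real.exp_le_exp.mpr (by linarith)
    have hkey : 2 * E - 1 ≤ S * E := by
      have := key_exp_ineq (S - 1)
      have hEeq : exp (S - 1) = E := rfl
      nlinarith [this]
    have hpow : s ^ (q - 1) * s = S := by
      have h := Real.rpow_add hs (q - 1) 1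
      rw [Real.rpow_one] at h
      rw [hSdef, ← h]
      ring_nf
    have hdivq : μ / q ≤ μ := div_le_self hμ0.le hq1.le
    constructor
    · have : 0 < μ / q := by positivity
      nlinarith
    · have hgoal : μ * s ^ (q-1) * E * s = μ * (S * E) := by
        rw [show μ * s ^ (q-1) * E * s = μ * ((s ^ (q-1) * s) * E) by ring, hpow]
      rw [hgoal]
      have h2 : μ / q * (E - 1) ≤ μ * (E - 1) :=
        mul_le_mul_of_nonneg_right hdivq (by linarith)
      nlinarith

lemma tendsto_fSub_atTop (hμ0 : 0 < μ) (hq1 : 1 < q) (hq2 : q < 2) {α : ℝ} (hα : 0 < α) :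
    Tendsto (fun t => |fSub μ q t| * exp (-α * t ^ 2)) atTop (𝓝 0) := by
  have hq0 : (0:ℝ) < q := by linarith
  have h0 : ∀ᶠ t : ℝ in atTop, (0:ℝ) ≤ |fSub μ q t| * exp (-α * t ^ 2) :=
    Eventually.of_forall fun t => mul_nonneg (abs_nonneg _) (exp_nonneg _)
  have hsm : Tendsto (fun t : ℝ => t ^ (q - 2)) atTop (𝓝 0) := by
    have := tendsto_rpow_neg_atTop (y := 2 - q) (by linarith)
    simpa [neg_sub] using this
  have hev : ∀ᶠ t : ℝ in atTop, t ^ (q - 2) ≤ α / 4 :=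
    hsm.eventually (eventually_le_nhds (by positivity))
  have hB : Tendsto (fun t : ℝ => μ * exp (-(α/2) * t ^ 2 - 1)) atTop (𝓝 0) := by
    have h1 : Tendsto (fun t : ℝ => t ^ 2) atTop atTop := tendsto_pow_atTop two_ne_zero
    have h2 : Tendsto (fun t : ℝ => -(α/2) * t ^ 2) atTop atBot :=
      h1.const_mul_atTop_of_neg (by linarith)
    have h3 : Tendsto (fun t : ℝ => -(α/2) * t ^ 2 - 1) atTop atBot :=
      tendsto_atBot_add_const_right _ (-1) h2 |>.congr (by intro x; ring)
    have h4 := Real.tendsto_exp_atBot.comp h3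
    have h5 := h4.const_mul μ
    simpa using h5
  refine squeeze_zero' h0 ?_ hB
  filter_upwards [eventually_ge_atTop (1:ℝ), hev] with t ht1 ht2
  have ht0 : (0:ℝ) < t := lt_of_lt_of_le one_pos ht1
  have hApos : (0:ℝ) ≤ t ^ (q - 1) := (Real.rpow_pos_of_pos ht0 _).le
  have hnn : (0:ℝ) ≤ μ * t ^ (q-1) * exp (t ^ q - 1) :=
    mul_nonneg (mul_nonneg hμ0.le hApos) (exp_nonneg _)
  have hpow1 : t ^ (q - 1) ≤ t ^ q := Real.rpow_le_rpow_of_exponent_le ht1 (by linarith)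
  have hexp1 : t ^ q ≤ exp (t ^ q) := by linarith [Real.add_one_le_exp (t ^ q)]
  have htq : t ^ (q - 2) * t ^ 2 = t ^ q := by
    have h2 : t ^ ((2:ℝ)) = t ^ (2:ℕ) := by
      rw [← Real.rpow_natCast t 2]; norm_num
    have h := Real.rpow_add ht0 (q - 2) 2
    rw [h2] at h
    rw [← h]
    ring_nf
  have hexpo : t ^ q + (t ^ q - 1 + -α * t ^ 2) ≤ -(α/2) * t ^ 2 - 1 := by
    have hsq : (0:ℝ) ≤ t ^ 2 := sq_nonneg t
    nlinarith [mul_le_mul_of_nonneg_right ht2 hsq]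
  calc |fSub μ q t| * exp (-α * t ^ 2)
      = μ * t ^ (q-1) * exp (t ^ q - 1 + -α * t ^ 2) := by
        rw [fSub_eq_large ht1, abs_of_nonneg hnn, Real.exp_add]; ring
    _ ≤ μ * exp (t ^ q) * exp (t ^ q - 1 + -α * t ^ 2) := by
        have : t ^ (q - 1) ≤ exp (t ^ q) := hpow1.trans hexp1
        gcongr
    _ = μ * exp (t ^ q + (t ^ q - 1 + -α * t ^ 2)) := by rw [mul_assoc, ← Real.exp_add]
    _ ≤ μ * exp (-(α/2) * t ^ 2 - 1) := by gcongr

lemma tendsto_fSub_cocompact (hμ0 : 0 < μ) (hq1 : 1 < q) (hq2 : q < 2) {α : ℝ} (hα : 0 < α) :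
    Tendsto (fun t => |fSub μ q t| * exp (-α * t ^ 2)) (cocompact ℝ) (𝓝 0) := by
  rw [cocompact_eq_atBot_atTop]
  refine tendsto_sup.mpr ⟨?_, tendsto_fSub_atTop hμ0 hq1 hq2 hα⟩
  have h := (tendsto_fSub_atTop (μ := μ) (q := q) hμ0 hq1 hq2 hα).comp tendsto_neg_atBot_atTop
  refine h.congr fun t => ?_
  simp only [Function.comp]
  rw [abs_fSub_even, neg_pow]
  ring_nf

/-- the function of Example 3.4 is continuous, odd and satisfies (H). -/
theorem statement17 (q μ : ℝ) (hq1 : 1 < q) (hq2 : q < 2)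
    (hμ0 : 0 < μ) (hμ : μ < lam1 / (2 * π)) :
    Continuous (fSub μ q) ∧ (∀ t : ℝ, fSub μ q (-t) = -(fSub μ q t)) ∧
    fSub μ q 0 = 0 ∧ HypH (fSub μ q) := by
  refine ⟨fSub_cont hμ0 hq1, fSub_odd μ q, by simp [fSub], fSub_cont hμ0 hq1, by simp [fSub],
    ⟨1, one_pos, 2, two_pos, fun t ht => ?_⟩, fun t ht => ?_, ?_, fun α hα => tendsto_fSub_cocompact hμ0 hq1 hq2 hα⟩
  · -- (i)
    rcases le_or_gt 0 t with h | h
    · rw [abs_of_nonneg h] at ht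
      exact hyp_i_pos hμ0 hq1 ht
    · rw [abs_of_neg h] at ht
      have := hyp_i_pos (μ := μ) hμ0 hq1 ht
      rwa [primF_even, abs_fSub_even] at this
  · -- (ii)
    rcases lt_trichotomy t 0 with h | rfl | h
    · have h2 := hyp_ii_pos (s := -t) (μ := μ) hμ0 hq1 (by linarith)
      rw [primF_even, fSub_odd, neg_mul_neg] at h2
      exact h2
    · exact absurd rfl ht
    · exact hyp_ii_pos hμ0 hq1 h
  · -- (iii)
    have hev : ∀ᶠ t in 𝓝[≠] (0:ℝ), primF (fSub μ q) t / t ^ 2 = μ / 2 := by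
      have h1 : ∀ᶠ t in 𝓝 (0:ℝ), t ∈ Ioo (-1:ℝ) 1 :=
        Ioo_mem_nhds (by norm_num) (by norm_num)
      filter_upwards [eventually_nhdsWithin_of_eventually_nhds h1, self_mem_nhdsWithin]
        with t htm hne
      have hne' : t ≠ 0 := by simpa using hne
      have hF : primF (fSub μ q) t = μ * t ^ 2 / 2 := by
        rcases le_or_gt 0 t with h | h
        · exact primF_small h (le_of_lt htm.2)
        · have h2 := primF_even (μ := μ) (q := q) (-t)
          rw [neg_neg] at h2
          rw [h2, primF_small (by linarith : (0:ℝ) ≤ -t) (by linarith [htm.1] : -t ≤ 1)]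
          ring
      rw [hF]
      have ht2 : t ^ 2 ≠ 0 := pow_ne_zero 2 hne'
      field_simp
    rw [Filter.limsup_congr hev, Filter.limsup_const]
    have h4 : lam1 / (4 * π) = lam1 / (2 * π) / 2 := by rw [div_div]; ring_nf
    rw [h4]
    linarith
end
end

section
/- Assume the Trudinger–Moser property holds with some constant ω ∈ (0,π] and that f satisfies hypotheses (H'), with ψ ∈ X, ‖ψ‖_X = 1, as in (H')(v). Let t > 0 be such that φ(tψ) < φ(0) = 0, and let Γ be the set of continuous paths γ : [0,1] → (X, ‖·‖_X) with γ(0) = 0 and γ(1) = tψ. Then the mountain pass level c = inf_{γ∈Γ} max_{τ∈[0,1]} φ(γ(τ)) satisfies c < ω/(2α₀). -/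
open MeasureTheory Real Set Filter Topology

noncomputable section

lemma gagKer_smul (c : ℝ) (u : ℝ → ℝ) :
    gagKer (fun x => c * u x) = fun p => c ^ 2 * gagKer u p := by
  funext p
  unfold gagKer
  rw [show (c * u p.1 - c * u p.2) ^ 2 = c ^ 2 * (u p.1 - u p.2) ^ 2 by ring,
    mul_div_assoc]

lemma gagSq_smul (c : ℝ) (u : ℝ → ℝ) :
    gagSq (fun x => c * u x) = c ^ 2 * gagSq u := by
  unfold gagSq
  rw [gagKer_smul]
  exact integral_const_mul _ _

lemma gagSq_nonneg (u : ℝ → ℝ) : 0 ≤ gagSq u :=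
  integral_nonneg fun p => div_nonneg (sq_nonneg _) (sq_nonneg _)

lemma gagNorm_smul (c : ℝ) (u : ℝ → ℝ) :
    gagNorm (fun x => c * u x) = |c| * gagNorm u := by
  unfold gagNorm
  rw [gagSq_smul, Real.sqrt_mul (sq_nonneg c), Real.sqrt_sq_eq_abs]

lemma memX_smul (c : ℝ) (u : ℝ → ℝ) (hu : memX u) : memX (fun x => c * u x) := by
  obtain ⟨⟨hm, hL2, hG⟩, hz⟩ := hu
  refine ⟨⟨hm.const_mul c, ?_, ?_⟩, ?_⟩
  · have : (fun x => (c * u x) ^ 2) = fun x => c ^ 2 * (u x) ^ 2 := by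
      funext x; ring
    rw [this]; exact hL2.const_mul _
  · rw [gagKer_smul]; exact hG.const_mul _
  · filter_upwards [hz] with x hx hnot
    rw [hx hnot, mul_zero]


/-- the mountain pass level lies below `ω/(2α₀)`. The level
`c = inf_{γ ∈ Γ} max_{τ ∈ [0,1]} φ(γ(τ))` satisfies `c < ω/(2α₀)`, i.e. there is
an admissible path along which `φ` stays below some `b < ω/(2α₀)`. -/
theorem statement19 (ω : ℝ) (hω0 : 0 < ω) (hωπ : ω ≤ π) (hTM : TMprop ω)
    (f : ℝ → ℝ) (hcont : Continuous f) (hf0 : f 0 = 0)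
    (hi : ∃ t₀ > (0 : ℝ), ∃ M > (0 : ℝ),
      ∀ t : ℝ, t₀ ≤ |t| → 0 < primF f t ∧ primF f t ≤ M * |f t|)
    (hii : ∀ t : ℝ, t ≠ 0 → 0 < 2 * primF f t ∧ 2 * primF f t ≤ f t * t)
    (hiii : Filter.limsup (fun t => primF f t / t ^ 2) (𝓝[≠] (0 : ℝ)) < lam1 / (4 * π))
    (α₀ : ℝ) (hα₀0 : 0 < α₀) (hα₀ : α₀ < 2 * π * ω)
    (hiv1 : ∀ α : ℝ, 0 < α → α < α₀ →
      Filter.Tendsto (fun t => |f t| * exp (-α * t ^ 2)) (Filter.cocompact ℝ) Filter.atTop)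
    (hiv2 : ∀ α : ℝ, α₀ < α →
      Filter.Tendsto (fun t => |f t| * exp (-α * t ^ 2)) (Filter.cocompact ℝ) (𝓝 0))
    (ψ : ℝ → ℝ) (hψX : memX ψ) (hψn : gagNorm ψ = 1)
    (hv : ∃ b : ℝ, b < ω / (2 * α₀) ∧ ∀ t : ℝ, 0 < t →
      t ^ 2 / (4 * π) - (∫ x in Ioo (0 : ℝ) 1, primF f (t * ψ x)) ≤ b)
    (t : ℝ) (ht : 0 < t) (htneg : phi f (fun x => t * ψ x) < phi f (fun _ => 0)) :
    ∃ γ : ℝ → ℝ → ℝ,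
      (∀ τ ∈ Icc (0 : ℝ) 1, memX (γ τ)) ∧
      (γ 0 = fun _ => 0) ∧ (γ 1 = fun x => t * ψ x) ∧
      (∀ τ ∈ Icc (0 : ℝ) 1, ∀ ε : ℝ, 0 < ε → ∃ δ : ℝ, 0 < δ ∧
        ∀ σ ∈ Icc (0 : ℝ) 1, |σ - τ| < δ → gagNorm (fun x => γ σ x - γ τ x) < ε) ∧
      ∃ b : ℝ, b < ω / (2 * α₀) ∧ ∀ τ ∈ Icc (0 : ℝ) 1, phi f (γ τ) ≤ b := by

  obtain ⟨b, hb, hbt⟩ := hv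
  have hψSq : gagSq ψ = 1 := by
    have h := hψn
    unfold gagNorm at h
    nlinarith [Real.sq_sqrt (gagSq_nonneg ψ), Real.sqrt_nonneg (gagSq ψ)]
  have hprim0 : primF f 0 = 0 := by
    unfold primF; simp
  have hphi : ∀ c : ℝ, phi f (fun x => c * ψ x)
      = c ^ 2 / (4 * π) - ∫ x in Ioo (0 : ℝ) 1, primF f (c * ψ x) := by
    intro c
    unfold phi
    rw [gagSq_smul, hψSq, mul_one]
  refine ⟨fun τ x => (τ * t) * ψ x, ?_, ?_, ?_, ?_, max b 0, ?_, ?_⟩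
  · intro τ _; exact memX_smul _ _ hψX
  · funext x; simp
  · funext x; simp
  · intro τ _ ε hε
    refine ⟨ε / t, div_pos hε ht, fun σ _ hσ => ?_⟩
    have : (fun x => σ * t * ψ x - τ * t * ψ x) = fun x => ((σ - τ) * t) * ψ x := by
      funext x; ring
    rw [this, gagNorm_smul, hψn, mul_one, abs_mul, abs_of_pos ht]
    calc |σ - τ| * t < (ε / t) * t := by
            exact mul_lt_mul_of_pos_right hσ ht
      _ = ε := div_mul_cancel₀ ε ht.ne'
  · have : 0 < ω / (2 * α₀) := div_pos hω0 (by positivity)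
    exact max_lt hb this
  · intro τ hτ
    rcases eq_or_lt_of_le hτ.1 with h0 | h0
    · subst h0
      rw [hphi]
      simp only [zero_mul, hprim0, integral_zero, sub_zero]
      exact le_trans (by norm_num) (le_max_right b 0)
    · exact le_trans (by rw [hphi]; exact hbt (τ * t) (mul_pos h0 ht)) (le_max_left b 0)
end
end
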